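/- Let I ⊆ ℝ be an open interval and let v : ℝ² × I → ℝ be smooth and positive with ∂v/∂t = v·Δv − ‖∇v‖² everywhere (∇, Δ Euclidean, in the x variable). Define Q := v·(∂³v/∂z³)·(∂³v/∂z̄³), where the Wirtinger derivatives are taken in the x variable. Then Q satisfies, at every point of ℝ² × I, the identity ∂Q/∂t = v·ΔQ − 16·v⁻¹·(v·(∂²v/∂z∂z̄) − (∂v/∂z)(∂v/∂z̄))·Q − 4·(v·(∂⁴v/∂z⁴) + 2(∂v/∂z)(∂³v/∂z³))·(v·(∂⁴v/∂z̄⁴) + 2(∂v/∂z̄)(∂³v/∂z̄³)) − 4·(v·(∂⁴v/∂z³∂z̄) − (∂v/∂z̄)(∂³v/∂z³))·(v·(∂⁴v/∂z̄³∂z) − (∂v/∂z)(∂³v/∂z̄³)), where ΔQ is the Euclidean Laplacian of Q in the x variable. -/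

import Mathlib

/- We identify `ℝ²` with `ℂ` via `(x₁,x₂) ↦ z = x₁ + i x₂`. -/

/-- Partial derivative of a complex-valued function in the first Euclidean
coordinate. -/
noncomputable def pdx (f : ℂ → ℂ) (z : ℂ) : ℂ :=
  deriv (fun s : ℝ => f (z + (s : ℂ))) 0

/-- Partial derivative of a complex-valued function in the second Euclidean
coordinate. -/
noncomputable def pdy (f : ℂ → ℂ) (z : ℂ) : ℂ :=
  deriv (fun s : ℝ => f (z + (s : ℂ) * Complex.I)) 0

/-- The Wirtinger derivative `∂f/∂z = (1/2)(∂f/∂x₁ − i ∂f/∂x₂)`. -/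
noncomputable def wz (f : ℂ → ℂ) : ℂ → ℂ :=
  fun z => (pdx f z - Complex.I * pdy f z) / 2

/-- The Wirtinger derivative `∂f/∂z̄ = (1/2)(∂f/∂x₁ + i ∂f/∂x₂)`. -/
noncomputable def wzb (f : ℂ → ℂ) : ℂ → ℂ :=
  fun z => (pdx f z + Complex.I * pdy f z) / 2

/-- Euclidean Laplacian of a complex-valued function on `ℝ² ≅ ℂ`. -/
noncomputable def lapC (f : ℂ → ℂ) (z : ℂ) : ℂ :=
  pdx (pdx f) z + pdy (pdy f) z

/-- Partial derivative of a real-valued function in the first Euclidean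
coordinate. -/
noncomputable def pdxR (f : ℂ → ℝ) (z : ℂ) : ℝ :=
  deriv (fun s : ℝ => f (z + (s : ℂ))) 0

/-- Partial derivative of a real-valued function in the second Euclidean
coordinate. -/
noncomputable def pdyR (f : ℂ → ℝ) (z : ℂ) : ℝ :=
  deriv (fun s : ℝ => f (z + (s : ℂ) * Complex.I)) 0

/-- Euclidean Laplacian on `ℝ² ≅ ℂ`. -/
noncomputable def lapR (f : ℂ → ℝ) (z : ℂ) : ℝ :=
  pdxR (pdxR f) z + pdyR (pdyR f) z

/-- Squared Euclidean norm of the gradient on `ℝ² ≅ ℂ`. -/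
noncomputable def gradSq (f : ℂ → ℝ) (z : ℂ) : ℝ :=
  (pdxR f z) ^ 2 + (pdyR f z) ^ 2

/-- The Daskalopoulos–Hamilton–Šešum quantity
`Q = v · (∂³v/∂z³) · (∂³v/∂z̄³)`, with Wirtinger derivatives taken in the `x`
variable. -/
noncomputable def QDHS (v : ℂ × ℝ → ℝ) : ℂ × ℝ → ℂ :=
  fun p => (v p : ℂ)
    * wz (wz (wz (fun w => (v (w, p.2) : ℂ)))) p.1
    * wzb (wzb (wzb (fun w => (v (w, p.2) : ℂ)))) p.1

open Complex Set Filter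

/-- Directional derivative on `ℂ × ℝ`. -/
noncomputable def dd (c : ℂ × ℝ) (g : ℂ × ℝ → ℂ) : ℂ × ℝ → ℂ := fun p => fderiv ℝ g p c

section DD
variable {s : Set (ℂ × ℝ)} (hs : IsOpen s) {g h : ℂ × ℝ → ℂ} {p : ℂ × ℝ}
include hs

lemma diffAt (hg : ContDiffOn ℝ (⊤:ℕ∞) g s) (hp : p ∈ s) : DifferentiableAt ℝ g p :=
  (hg.contDiffAt (hs.mem_nhds hp)).differentiableAt (by decide)

lemma dd_contDiffOn (hg : ContDiffOn ℝ (⊤:ℕ∞) g s) (c : ℂ × ℝ) :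
    ContDiffOn ℝ (⊤:ℕ∞) (dd c g) s :=
  (hg.fderiv_of_isOpen hs (by decide)).clm_apply contDiffOn_const

lemma dd_congr (hgh : EqOn g h s) (hp : p ∈ s) (c : ℂ × ℝ) : dd c g p = dd c h p := by
  unfold dd
  rw [Filter.EventuallyEq.fderiv_eq (by filter_upwards [hs.mem_nhds hp] using hgh)]

lemma dd_add (hg : ContDiffOn ℝ (⊤:ℕ∞) g s) (hh : ContDiffOn ℝ (⊤:ℕ∞) h s) (hp : p ∈ s)
    (c : ℂ × ℝ) : dd c (fun q => g q + h q) p = dd c g p + dd c h p := by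
  unfold dd; rw [fderiv_fun_add (diffAt hs hg hp) (diffAt hs hh hp)]; rfl

lemma dd_sub (hg : ContDiffOn ℝ (⊤:ℕ∞) g s) (hh : ContDiffOn ℝ (⊤:ℕ∞) h s) (hp : p ∈ s)
    (c : ℂ × ℝ) : dd c (fun q => g q - h q) p = dd c g p - dd c h p := by
  unfold dd; rw [fderiv_fun_sub (diffAt hs hg hp) (diffAt hs hh hp)]; rfl

lemma dd_const_mul (hg : ContDiffOn ℝ (⊤:ℕ∞) g s) (hp : p ∈ s) (a : ℂ) (c : ℂ × ℝ) :
    dd c (fun q => a * g q) p = a * dd c g p := by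
  unfold dd; rw [fderiv_const_mul (diffAt hs hg hp) a]; simp

lemma dd_div_const (hg : ContDiffOn ℝ (⊤:ℕ∞) g s) (hp : p ∈ s) (a : ℂ) (c : ℂ × ℝ) :
    dd c (fun q => g q / a) p = dd c g p / a := by
  have : (fun q => g q / a) = (fun q => a⁻¹ * g q) := by funext q; rw [div_eq_inv_mul]
  rw [this, dd_const_mul hs hg hp, div_eq_inv_mul]

lemma dd_mul (hg : ContDiffOn ℝ (⊤:ℕ∞) g s) (hh : ContDiffOn ℝ (⊤:ℕ∞) h s) (hp : p ∈ s)
    (c : ℂ × ℝ) : dd c (fun q => g q * h q) p = dd c g p * h p + g p * dd c h p := by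
  unfold dd; rw [fderiv_fun_mul (diffAt hs hg hp) (diffAt hs hh hp)]; simp; ring

lemma dd_comm (hg : ContDiffOn ℝ (⊤:ℕ∞) g s) (hp : p ∈ s) (c d : ℂ × ℝ) :
    dd c (dd d g) p = dd d (dd c g) p := by
  have hsym : IsSymmSndFDerivAt ℝ g p :=
    (hg.contDiffAt (hs.mem_nhds hp)).isSymmSndFDerivAt (by rw [minSmoothness_of_isRCLikeNormedField]; decide)
  have hdiff : DifferentiableAt ℝ (fderiv ℝ g) p :=
    ((hg.contDiffAt (hs.mem_nhds hp)).fderiv_right (m := 1) (by decide)).differentiableAt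
      (by decide)
  have key : ∀ c' e : ℂ × ℝ, dd c' (dd e g) p = fderiv ℝ (fderiv ℝ g) p c' e := by
    intro c' e
    show fderiv ℝ (fun q => (fderiv ℝ g q) e) p c' = _
    rw [fderiv_clm_apply hdiff (differentiableAt_const e)]
    simp
  rw [key c d, key d c, hsym c d]

end DD

/-- `∂/∂z` on the product space (spatial Wirtinger derivative). -/
noncomputable def opA (g : ℂ × ℝ → ℂ) : ℂ × ℝ → ℂ :=
  fun p => (dd (1, 0) g p - Complex.I * dd (Complex.I, 0) g p) / 2

/-- `∂/∂z̄` on the product space. -/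
noncomputable def opB (g : ℂ × ℝ → ℂ) : ℂ × ℝ → ℂ :=
  fun p => (dd (1, 0) g p + Complex.I * dd (Complex.I, 0) g p) / 2

/-- `∂/∂t` on the product space. -/
noncomputable def opT (g : ℂ × ℝ → ℂ) : ℂ × ℝ → ℂ := dd (0, 1) g

section OPS
variable {s : Set (ℂ × ℝ)} (hs : IsOpen s) {g h : ℂ × ℝ → ℂ} {p : ℂ × ℝ}
include hs

lemma opA_contDiffOn (hg : ContDiffOn ℝ (⊤:ℕ∞) g s) : ContDiffOn ℝ (⊤:ℕ∞) (opA g) s :=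
  ((dd_contDiffOn hs hg _).sub (contDiffOn_const.mul (dd_contDiffOn hs hg _))).div_const 2

lemma opB_contDiffOn (hg : ContDiffOn ℝ (⊤:ℕ∞) g s) : ContDiffOn ℝ (⊤:ℕ∞) (opB g) s :=
  ((dd_contDiffOn hs hg _).add (contDiffOn_const.mul (dd_contDiffOn hs hg _))).div_const 2

lemma opT_contDiffOn (hg : ContDiffOn ℝ (⊤:ℕ∞) g s) : ContDiffOn ℝ (⊤:ℕ∞) (opT g) s :=
  dd_contDiffOn hs hg _

lemma opA_congr (hgh : EqOn g h s) : EqOn (opA g) (opA h) s := by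
  intro p hp; unfold opA; rw [dd_congr hs hgh hp, dd_congr hs hgh hp]

lemma opB_congr (hgh : EqOn g h s) : EqOn (opB g) (opB h) s := by
  intro p hp; unfold opB; rw [dd_congr hs hgh hp, dd_congr hs hgh hp]

lemma opA_mul (hg : ContDiffOn ℝ (⊤:ℕ∞) g s) (hh : ContDiffOn ℝ (⊤:ℕ∞) h s) (hp : p ∈ s) :
    opA (fun q => g q * h q) p = opA g p * h p + g p * opA h p := by
  unfold opA; rw [dd_mul hs hg hh hp, dd_mul hs hg hh hp]; ring

lemma opB_mul (hg : ContDiffOn ℝ (⊤:ℕ∞) g s) (hh : ContDiffOn ℝ (⊤:ℕ∞) h s) (hp : p ∈ s) :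
    opB (fun q => g q * h q) p = opB g p * h p + g p * opB h p := by
  unfold opB; rw [dd_mul hs hg hh hp, dd_mul hs hg hh hp]; ring

lemma opT_mul (hg : ContDiffOn ℝ (⊤:ℕ∞) g s) (hh : ContDiffOn ℝ (⊤:ℕ∞) h s) (hp : p ∈ s) :
    opT (fun q => g q * h q) p = opT g p * h p + g p * opT h p := by
  unfold opT; rw [dd_mul hs hg hh hp]

lemma opA_sub (hg : ContDiffOn ℝ (⊤:ℕ∞) g s) (hh : ContDiffOn ℝ (⊤:ℕ∞) h s) (hp : p ∈ s) :
    opA (fun q => g q - h q) p = opA g p - opA h p := by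
  unfold opA; rw [dd_sub hs hg hh hp, dd_sub hs hg hh hp]; ring

lemma opB_sub (hg : ContDiffOn ℝ (⊤:ℕ∞) g s) (hh : ContDiffOn ℝ (⊤:ℕ∞) h s) (hp : p ∈ s) :
    opB (fun q => g q - h q) p = opB g p - opB h p := by
  unfold opB; rw [dd_sub hs hg hh hp, dd_sub hs hg hh hp]; ring

lemma opA_add (hg : ContDiffOn ℝ (⊤:ℕ∞) g s) (hh : ContDiffOn ℝ (⊤:ℕ∞) h s) (hp : p ∈ s) :
    opA (fun q => g q + h q) p = opA g p + opA h p := by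
  unfold opA; rw [dd_add hs hg hh hp, dd_add hs hg hh hp]; ring

lemma opB_add (hg : ContDiffOn ℝ (⊤:ℕ∞) g s) (hh : ContDiffOn ℝ (⊤:ℕ∞) h s) (hp : p ∈ s) :
    opB (fun q => g q + h q) p = opB g p + opB h p := by
  unfold opB; rw [dd_add hs hg hh hp, dd_add hs hg hh hp]; ring

lemma opA_const_mul (hg : ContDiffOn ℝ (⊤:ℕ∞) g s) (hp : p ∈ s) (a : ℂ) :
    opA (fun q => a * g q) p = a * opA g p := by
  unfold opA; rw [dd_const_mul hs hg hp, dd_const_mul hs hg hp]; ring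

lemma opB_const_mul (hg : ContDiffOn ℝ (⊤:ℕ∞) g s) (hp : p ∈ s) (a : ℂ) :
    opB (fun q => a * g q) p = a * opB g p := by
  unfold opB; rw [dd_const_mul hs hg hp, dd_const_mul hs hg hp]; ring

/-- `dd` of `opA` in terms of second directional derivatives. -/
lemma dd_opA (hg : ContDiffOn ℝ (⊤:ℕ∞) g s) (hp : p ∈ s) (c : ℂ × ℝ) :
    dd c (opA g) p
      = (dd c (dd (1,0) g) p - Complex.I * dd c (dd ((Complex.I : ℂ), (0:ℝ)) g) p) / 2 := by
  have h1 := dd_contDiffOn hs hg ((1:ℂ), (0:ℝ))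
  have h2 := dd_contDiffOn hs hg ((Complex.I : ℂ), (0:ℝ))
  show dd c (fun q => (dd (1,0) g q - Complex.I * dd (Complex.I, 0) g q) / 2) p = _
  rw [dd_div_const hs ((h1.sub (contDiffOn_const.mul h2))) hp,
    dd_sub hs h1 (contDiffOn_const.mul h2) hp, dd_const_mul hs h2 hp]

lemma dd_opB (hg : ContDiffOn ℝ (⊤:ℕ∞) g s) (hp : p ∈ s) (c : ℂ × ℝ) :
    dd c (opB g) p
      = (dd c (dd (1,0) g) p + Complex.I * dd c (dd ((Complex.I : ℂ), (0:ℝ)) g) p) / 2 := by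
  have h1 := dd_contDiffOn hs hg ((1:ℂ), (0:ℝ))
  have h2 := dd_contDiffOn hs hg ((Complex.I : ℂ), (0:ℝ))
  show dd c (fun q => (dd (1,0) g q + Complex.I * dd (Complex.I, 0) g q) / 2) p = _
  rw [dd_div_const hs ((h1.add (contDiffOn_const.mul h2))) hp,
    dd_add hs h1 (contDiffOn_const.mul h2) hp, dd_const_mul hs h2 hp]

lemma opT_opA_comm (hg : ContDiffOn ℝ (⊤:ℕ∞) g s) : EqOn (opT (opA g)) (opA (opT g)) s := by
  intro p hp
  show dd (0,1) (opA g) p = opA (dd (0,1) g) p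
  rw [dd_opA hs hg hp, dd_comm hs hg hp (0,1) (1,0), dd_comm hs hg hp (0,1) (Complex.I,0)]
  rfl

lemma opT_opB_comm (hg : ContDiffOn ℝ (⊤:ℕ∞) g s) : EqOn (opT (opB g)) (opB (opT g)) s := by
  intro p hp
  show dd (0,1) (opB g) p = opB (dd (0,1) g) p
  rw [dd_opB hs hg hp, dd_comm hs hg hp (0,1) (1,0), dd_comm hs hg hp (0,1) (Complex.I,0)]
  rfl

lemma opB_opA_comm (hg : ContDiffOn ℝ (⊤:ℕ∞) g s) : EqOn (opB (opA g)) (opA (opB g)) s := by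
  intro p hp
  show (dd (1,0) (opA g) p + Complex.I * dd (Complex.I,0) (opA g) p) / 2
      = (dd (1,0) (opB g) p - Complex.I * dd (Complex.I,0) (opB g) p) / 2
  rw [dd_opA hs hg hp, dd_opA hs hg hp, dd_opB hs hg hp, dd_opB hs hg hp,
    dd_comm hs hg hp (1,0) (Complex.I,0)]
  ring

end OPS
section Bridge
variable {I : Set ℝ} (hI : IsOpen I) {g : ℂ × ℝ → ℂ} {t : ℝ} {x : ℂ}

lemma mem_prodI (ht : t ∈ I) (x : ℂ) : (x, t) ∈ (Set.univ ×ˢ I : Set (ℂ × ℝ)) := by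
  simp [ht]

lemma prodI_isOpen (hI : IsOpen I) : IsOpen (Set.univ ×ˢ I : Set (ℂ × ℝ)) :=
  isOpen_univ.prod hI

lemma slice_contDiff (hg : ContDiffOn ℝ (⊤:ℕ∞) g (Set.univ ×ˢ I)) (ht : t ∈ I) :
    ContDiff ℝ (⊤:ℕ∞) (fun w => g (w, t)) := by
  rw [← contDiffOn_univ]
  exact hg.comp ((contDiff_id.prodMk contDiff_const).contDiffOn) (fun w _ => mem_prodI ht w)

lemma line1_hasDerivAt (x : ℂ) (t : ℝ) :
    HasDerivAt (fun σ : ℝ => ((x + (σ : ℂ)), t)) (((1 : ℂ), (0 : ℝ))) 0 := by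
  have h1 : HasDerivAt (fun σ : ℝ => (σ : ℂ)) 1 0 := by
    simpa using (hasDerivAt_id (0:ℝ)).ofReal_comp
  exact (h1.const_add x).prodMk (hasDerivAt_const 0 t)

lemma line2_hasDerivAt (x : ℂ) (t : ℝ) :
    HasDerivAt (fun σ : ℝ => ((x + (σ : ℂ) * Complex.I), t)) (((Complex.I : ℂ), (0 : ℝ))) 0 := by
  have h1 : HasDerivAt (fun σ : ℝ => (σ : ℂ) * Complex.I) Complex.I 0 := by
    simpa using (Complex.ofRealCLM.hasDerivAt (x := (0:ℝ))).mul_const Complex.I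
  exact (h1.const_add x).prodMk (hasDerivAt_const 0 t)

include hI

lemma pdx_slice (hg : ContDiffOn ℝ (⊤:ℕ∞) g (Set.univ ×ˢ I)) (ht : t ∈ I) (x : ℂ) :
    pdx (fun w => g (w, t)) x = dd (1, 0) g (x, t) := by
  have hgd : DifferentiableAt ℝ g (x, t) :=
    diffAt (prodI_isOpen hI) hg (mem_prodI ht x)
  have h0 : ((x + ((0:ℝ) : ℂ)), t) = (x, t) := by simp
  have hF : HasFDerivAt g (fderiv ℝ g (x, t)) ((x + ((0:ℝ) : ℂ)), t) := h0 ▸ hgd.hasFDerivAt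
  exact (hF.comp_hasDerivAt 0 (line1_hasDerivAt x t)).deriv

lemma pdy_slice (hg : ContDiffOn ℝ (⊤:ℕ∞) g (Set.univ ×ˢ I)) (ht : t ∈ I) (x : ℂ) :
    pdy (fun w => g (w, t)) x = dd (Complex.I, 0) g (x, t) := by
  have hgd : DifferentiableAt ℝ g (x, t) :=
    diffAt (prodI_isOpen hI) hg (mem_prodI ht x)
  have h0 : ((x + ((0:ℝ) : ℂ) * Complex.I), t) = (x, t) := by simp
  have hF : HasFDerivAt g (fderiv ℝ g (x, t)) ((x + ((0:ℝ) : ℂ) * Complex.I), t) :=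
    h0 ▸ hgd.hasFDerivAt
  exact (hF.comp_hasDerivAt 0 (line2_hasDerivAt x t)).deriv

lemma wz_slice (hg : ContDiffOn ℝ (⊤:ℕ∞) g (Set.univ ×ˢ I)) (ht : t ∈ I) (x : ℂ) :
    wz (fun w => g (w, t)) x = opA g (x, t) := by
  unfold wz opA
  rw [pdx_slice hI hg ht x, pdy_slice hI hg ht x]

lemma wzb_slice (hg : ContDiffOn ℝ (⊤:ℕ∞) g (Set.univ ×ˢ I)) (ht : t ∈ I) (x : ℂ) :
    wzb (fun w => g (w, t)) x = opB g (x, t) := by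
  unfold wzb opB
  rw [pdx_slice hI hg ht x, pdy_slice hI hg ht x]

lemma wz_slice_fun (hg : ContDiffOn ℝ (⊤:ℕ∞) g (Set.univ ×ˢ I)) (ht : t ∈ I) :
    wz (fun w => g (w, t)) = (fun w => opA g (w, t)) :=
  funext fun w => wz_slice hI hg ht w

lemma wzb_slice_fun (hg : ContDiffOn ℝ (⊤:ℕ∞) g (Set.univ ×ˢ I)) (ht : t ∈ I) :
    wzb (fun w => g (w, t)) = (fun w => opB g (w, t)) :=
  funext fun w => wzb_slice hI hg ht w

lemma derivT_slice (hg : ContDiffOn ℝ (⊤:ℕ∞) g (Set.univ ×ˢ I)) (ht : t ∈ I) (x : ℂ) :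
    deriv (fun σ : ℝ => g (x, σ)) t = opT g (x, t) := by
  have hgd : DifferentiableAt ℝ g (x, t) :=
    diffAt (prodI_isOpen hI) hg (mem_prodI ht x)
  have hline : HasDerivAt (fun σ : ℝ => ((x : ℂ), σ)) (((0 : ℂ), (1 : ℝ))) t :=
    (hasDerivAt_const t x).prodMk (hasDerivAt_id t)
  exact (hgd.hasFDerivAt.comp_hasDerivAt t hline).deriv

lemma lap_slice (hg : ContDiffOn ℝ (⊤:ℕ∞) g (Set.univ ×ˢ I)) (ht : t ∈ I) (x : ℂ) :
    lapC (fun w => g (w, t)) x = 4 * opA (opB g) (x, t) := by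
  have hs := prodI_isOpen hI
  have hp := mem_prodI ht x
  have e1 : pdx (fun w => g (w, t)) = (fun w => dd (1, 0) g (w, t)) :=
    funext fun w => pdx_slice hI hg ht w
  have e2 : pdy (fun w => g (w, t)) = (fun w => dd (Complex.I, 0) g (w, t)) :=
    funext fun w => pdy_slice hI hg ht w
  have h1 := dd_contDiffOn hs hg ((1:ℂ), (0:ℝ))
  have h2 := dd_contDiffOn hs hg ((Complex.I : ℂ), (0:ℝ))
  unfold lapC
  rw [e1, e2, pdx_slice hI h1 ht x, pdy_slice hI h2 ht x]
  show _ = 4 * ((dd (1,0) (opB g) (x,t) - Complex.I * dd (Complex.I,0) (opB g) (x,t)) / 2)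
  rw [dd_opB hs hg hp, dd_opB hs hg hp, dd_comm hs hg hp (1,0) (Complex.I,0)]
  ring_nf
  rw [Complex.I_sq]
  ring

end Bridge

section RealBridge
open Complex

lemma pdxR_ofReal (f : ℂ → ℝ) (x : ℂ)
    (hd : DifferentiableAt ℝ (fun s : ℝ => f (x + (s : ℂ))) 0) :
    ((pdxR f x : ℝ) : ℂ) = pdx (fun z => ((f z : ℝ) : ℂ)) x :=
  (hd.hasDerivAt.ofReal_comp).deriv.symm

lemma pdyR_ofReal (f : ℂ → ℝ) (x : ℂ)
    (hd : DifferentiableAt ℝ (fun s : ℝ => f (x + (s : ℂ) * Complex.I)) 0) :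
    ((pdyR f x : ℝ) : ℂ) = pdy (fun z => ((f z : ℝ) : ℂ)) x :=
  (hd.hasDerivAt.ofReal_comp).deriv.symm

lemma dd_sum_eq {s : Set (ℂ × ℝ)} (hs : IsOpen s) {g : ℂ × ℝ → ℂ}
    (hg : ContDiffOn ℝ (⊤:ℕ∞) g s) {p : ℂ × ℝ} (hp : p ∈ s) :
    dd (1, 0) (dd (1, 0) g) p + dd (Complex.I, 0) (dd (Complex.I, 0) g) p
      = 4 * opA (opB g) p := by
  show _ = 4 * ((dd (1,0) (opB g) p - Complex.I * dd (Complex.I,0) (opB g) p) / 2)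
  rw [dd_opB hs hg hp, dd_opB hs hg hp, dd_comm hs hg hp (1,0) (Complex.I,0)]
  ring_nf
  rw [Complex.I_sq]
  ring

variable {I : Set ℝ} {v : ℂ × ℝ → ℝ} {t : ℝ}

lemma sliceR_contDiff (hv : ContDiffOn ℝ (⊤:ℕ∞) v (Set.univ ×ˢ I)) (ht : t ∈ I) :
    ContDiff ℝ (⊤:ℕ∞) (fun w => v (w, t)) := by
  rw [← contDiffOn_univ]
  exact hv.comp ((contDiff_id.prodMk contDiff_const).contDiffOn) (fun w _ => mem_prodI ht w)

lemma flow_opT (hI_open : IsOpen I) (hv_smooth : ContDiffOn ℝ (⊤:ℕ∞) v (Set.univ ×ˢ I))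
    (hv_flow : ∀ p : ℂ × ℝ, p.2 ∈ I →
      deriv (fun s : ℝ => v (p.1, s)) p.2
        = v p * lapR (fun z => v (z, p.2)) p.1 - gradSq (fun z => v (z, p.2)) p.1) :
    Set.EqOn (opT (fun p : ℂ × ℝ => ((v p : ℝ) : ℂ)))
      (fun q => 4 * (((v q : ℝ) : ℂ) * opA (opB (fun p : ℂ × ℝ => ((v p : ℝ) : ℂ))) q
          - opA (fun p : ℂ × ℝ => ((v p : ℝ) : ℂ)) q
            * opB (fun p : ℂ × ℝ => ((v p : ℝ) : ℂ)) q))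
      (Set.univ ×ˢ I) := by
  have hs : IsOpen (Set.univ ×ˢ I : Set (ℂ × ℝ)) := prodI_isOpen hI_open
  have hu : ContDiffOn ℝ (⊤:ℕ∞) (fun p : ℂ × ℝ => ((v p : ℝ) : ℂ)) (Set.univ ×ˢ I) :=
    Complex.ofRealCLM.contDiff.comp_contDiffOn hv_smooth
  rintro ⟨w, τ⟩ hp
  have hτ : τ ∈ I := hp.2
  have hfr : ContDiff ℝ (⊤:ℕ∞) (fun z => v (z, τ)) := sliceR_contDiff hv_smooth hτ
  -- first-order conversions
  have L1 : ∀ z : ℂ, ((pdxR (fun z' => v (z', τ)) z : ℝ) : ℂ)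
      = dd (1, 0) (fun p : ℂ × ℝ => ((v p : ℝ) : ℂ)) (z, τ) := by
    intro z
    have hline : Differentiable ℝ (fun s : ℝ => z + (s : ℂ)) :=
      (Complex.ofRealCLM.differentiable).const_add z
    have hd : DifferentiableAt ℝ (fun s : ℝ => v (z + (s : ℂ), τ)) 0 :=
      ((hfr.differentiable (by decide)).comp hline).differentiableAt
    have h1 := pdxR_ofReal (fun z' => v (z', τ)) z hd
    rw [h1]
    exact pdx_slice hI_open hu hτ z
  have L2 : ∀ z : ℂ, ((pdyR (fun z' => v (z', τ)) z : ℝ) : ℂ)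
      = dd (Complex.I, 0) (fun p : ℂ × ℝ => ((v p : ℝ) : ℂ)) (z, τ) := by
    intro z
    have hline : Differentiable ℝ (fun s : ℝ => z + (s : ℂ) * Complex.I) :=
      ((Complex.ofRealCLM.differentiable).mul_const Complex.I).const_add z
    have hd : DifferentiableAt ℝ (fun s : ℝ => v (z + (s : ℂ) * Complex.I, τ)) 0 :=
      ((hfr.differentiable (by decide)).comp hline).differentiableAt
    have h1 := pdyR_ofReal (fun z' => v (z', τ)) z hd
    rw [h1]
    exact pdy_slice hI_open hu hτ z
  -- smoothness of first partials
  have hsm1 : ContDiff ℝ (⊤:ℕ∞) (pdxR (fun z' => v (z', τ))) := by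
    have e : pdxR (fun z' => v (z', τ))
        = fun z => (dd (1, 0) (fun p : ℂ × ℝ => ((v p : ℝ) : ℂ)) (z, τ)).re := by
      funext z; rw [← L1 z]; simp
    rw [e]
    exact Complex.reCLM.contDiff.comp (slice_contDiff (dd_contDiffOn hs hu _) hτ)
  have hsm2 : ContDiff ℝ (⊤:ℕ∞) (pdyR (fun z' => v (z', τ))) := by
    have e : pdyR (fun z' => v (z', τ))
        = fun z => (dd (Complex.I, 0) (fun p : ℂ × ℝ => ((v p : ℝ) : ℂ)) (z, τ)).re := by
      funext z; rw [← L2 z]; simp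
    rw [e]
    exact Complex.reCLM.contDiff.comp (slice_contDiff (dd_contDiffOn hs hu _) hτ)
  -- laplacian conversion
  have hlap : ((lapR (fun z => v (z, τ)) w : ℝ) : ℂ)
      = 4 * opA (opB (fun p : ℂ × ℝ => ((v p : ℝ) : ℂ))) (w, τ) := by
    have hline : Differentiable ℝ (fun s : ℝ => w + (s : ℂ)) :=
      (Complex.ofRealCLM.differentiable).const_add w
    have hline2 : Differentiable ℝ (fun s : ℝ => w + (s : ℂ) * Complex.I) :=
      ((Complex.ofRealCLM.differentiable).mul_const Complex.I).const_add w
    have hd1 : DifferentiableAt ℝ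
        (fun s : ℝ => pdxR (fun z' => v (z', τ)) (w + (s : ℂ))) 0 :=
      ((hsm1.differentiable (by decide)).comp hline).differentiableAt
    have hd2 : DifferentiableAt ℝ
        (fun s : ℝ => pdyR (fun z' => v (z', τ)) (w + (s : ℂ) * Complex.I)) 0 :=
      ((hsm2.differentiable (by decide)).comp hline2).differentiableAt
    have e1 : (fun z => ((pdxR (fun z' => v (z', τ)) z : ℝ) : ℂ))
        = fun z => dd (1, 0) (fun p : ℂ × ℝ => ((v p : ℝ) : ℂ)) (z, τ) := funext L1
    have e2 : (fun z => ((pdyR (fun z' => v (z', τ)) z : ℝ) : ℂ))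
        = fun z => dd (Complex.I, 0) (fun p : ℂ × ℝ => ((v p : ℝ) : ℂ)) (z, τ) := funext L2
    have h1 := pdxR_ofReal (pdxR (fun z' => v (z', τ))) w hd1
    have h2 := pdyR_ofReal (pdyR (fun z' => v (z', τ))) w hd2
    rw [e1] at h1
    rw [e2] at h2
    have h1' := pdx_slice hI_open (dd_contDiffOn hs hu ((1:ℂ), (0:ℝ))) hτ w
    have h2' := pdy_slice hI_open (dd_contDiffOn hs hu ((Complex.I : ℂ), (0:ℝ))) hτ w
    unfold lapR
    push_cast
    rw [h1, h2, h1', h2']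
    exact dd_sum_eq hs hu hp
  -- gradient conversion
  have hgrad : ((gradSq (fun z => v (z, τ)) w : ℝ) : ℂ)
      = 4 * (opA (fun p : ℂ × ℝ => ((v p : ℝ) : ℂ)) (w, τ)
          * opB (fun p : ℂ × ℝ => ((v p : ℝ) : ℂ)) (w, τ)) := by
    unfold gradSq
    push_cast
    rw [L1 w, L2 w]
    show _ = 4 * (((dd (1,0) (fun p : ℂ × ℝ => ((v p : ℝ) : ℂ)) (w,τ)
        - Complex.I * dd (Complex.I,0) (fun p : ℂ × ℝ => ((v p : ℝ) : ℂ)) (w,τ)) / 2)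
      * ((dd (1,0) (fun p : ℂ × ℝ => ((v p : ℝ) : ℂ)) (w,τ)
        + Complex.I * dd (Complex.I,0) (fun p : ℂ × ℝ => ((v p : ℝ) : ℂ)) (w,τ)) / 2))
    ring_nf
    rw [Complex.I_sq]
    ring
  -- time derivative conversion
  have hdv : DifferentiableAt ℝ (fun σ : ℝ => v (w, σ)) τ := by
    have hsl : ContDiffOn ℝ (⊤:ℕ∞) (fun σ : ℝ => v (w, σ)) I :=
      hv_smooth.comp ((contDiff_const.prodMk contDiff_id).contDiffOn)
        (fun σ hσ => by simp [hσ])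
    exact (hsl.contDiffAt (hI_open.mem_nhds hτ)).differentiableAt (by decide)
  have h1 : deriv (fun σ : ℝ => ((v (w, σ) : ℝ) : ℂ)) τ
      = opT (fun p : ℂ × ℝ => ((v p : ℝ) : ℂ)) (w, τ) := derivT_slice hI_open hu hτ w
  have h2 : deriv (fun σ : ℝ => ((v (w, σ) : ℝ) : ℂ)) τ
      = ((deriv (fun σ : ℝ => v (w, σ)) τ : ℝ) : ℂ) := hdv.hasDerivAt.ofReal_comp.deriv
  have hfl : deriv (fun σ : ℝ => v (w, σ)) τ
      = v (w, τ) * lapR (fun z => v (z, τ)) w - gradSq (fun z => v (z, τ)) w :=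
    hv_flow (w, τ) hτ
  show opT (fun p : ℂ × ℝ => ((v p : ℝ) : ℂ)) (w, τ) = _
  rw [← h1, h2, hfl, Complex.ofReal_sub, Complex.ofReal_mul, hlap, hgrad]
  ring

end RealBridge
/-- Let `v` be a smooth positive solution of
`∂v/∂t = v·Δv − ‖∇v‖²` on `ℝ² × I`, `I` an open interval. Then
`Q = v·v_{zzz}·v_{z̄z̄z̄}` satisfies the Daskalopoulos–Hamilton–Šešum evolution
equation
`∂Q/∂t = v·ΔQ − 16 v⁻¹ (v v_{z z̄} − v_z v_{z̄}) Q
  − 4 (v v_{zzzz} + 2 v_z v_{zzz})(v v_{z̄z̄z̄z̄} + 2 v_{z̄} v_{z̄z̄z̄})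
  − 4 (v v_{zzz z̄} − v_{z̄} v_{zzz})(v v_{z̄z̄z̄ z} − v_z v_{z̄z̄z̄})`. -/
theorem QDHS_evolution (I : Set ℝ) (hI_open : IsOpen I) (hI_conn : I.OrdConnected)
    (v : ℂ × ℝ → ℝ)
    (hv_smooth : ContDiffOn ℝ (⊤ : ℕ∞) v (Set.univ ×ˢ I))
    (hv_pos : ∀ p : ℂ × ℝ, p.2 ∈ I → 0 < v p)
    (hv_flow : ∀ p : ℂ × ℝ, p.2 ∈ I →
      deriv (fun s : ℝ => v (p.1, s)) p.2
        = v p * lapR (fun z => v (z, p.2)) p.1 - gradSq (fun z => v (z, p.2)) p.1) :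
    ∀ (x : ℂ) (t : ℝ), t ∈ I →
      ∀ V : ℂ → ℂ, V = (fun w => (v (w, t) : ℂ)) →
        deriv (fun s : ℝ => QDHS v (x, s)) t
          = V x * lapC (fun w => QDHS v (w, t)) x
            - 16 * (V x)⁻¹ * (V x * wz (wzb V) x - wz V x * wzb V x) * QDHS v (x, t)
            - 4 * (V x * wz (wz (wz (wz V))) x + 2 * wz V x * wz (wz (wz V)) x)
                * (V x * wzb (wzb (wzb (wzb V))) x + 2 * wzb V x * wzb (wzb (wzb V)) x)
            - 4 * (V x * wz (wz (wz (wzb V))) x - wzb V x * wz (wz (wz V)) x)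
                * (V x * wzb (wzb (wzb (wz V))) x - wz V x * wzb (wzb (wzb V)) x) := by

  intro x t ht V hV
  subst hV
  beta_reduce
  have hs : IsOpen (Set.univ ×ˢ I : Set (ℂ × ℝ)) := prodI_isOpen hI_open
  have hu : ContDiffOn ℝ (⊤:ℕ∞) (fun p : ℂ × ℝ => ((v p : ℝ) : ℂ)) (Set.univ ×ˢ I) :=
    Complex.ofRealCLM.contDiff.comp_contDiffOn hv_smooth
  have hp0 : ((x, t) : ℂ × ℝ) ∈ (Set.univ ×ˢ I : Set (ℂ × ℝ)) := mem_prodI ht x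
  have sm_0_1 : ContDiffOn ℝ (⊤:ℕ∞) (opB ((fun p : ℂ × ℝ => ((v p : ℝ) : ℂ)))) (Set.univ ×ˢ I) := opB_contDiffOn hs hu
  have sm_1_0 : ContDiffOn ℝ (⊤:ℕ∞) (opA ((fun p : ℂ × ℝ => ((v p : ℝ) : ℂ)))) (Set.univ ×ˢ I) := opA_contDiffOn hs hu
  have sm_0_2 : ContDiffOn ℝ (⊤:ℕ∞) (opB (opB ((fun p : ℂ × ℝ => ((v p : ℝ) : ℂ))))) (Set.univ ×ˢ I) := opB_contDiffOn hs sm_0_1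
  have sm_1_1 : ContDiffOn ℝ (⊤:ℕ∞) (opA (opB ((fun p : ℂ × ℝ => ((v p : ℝ) : ℂ))))) (Set.univ ×ˢ I) := opA_contDiffOn hs sm_0_1
  have sm_2_0 : ContDiffOn ℝ (⊤:ℕ∞) (opA (opA ((fun p : ℂ × ℝ => ((v p : ℝ) : ℂ))))) (Set.univ ×ˢ I) := opA_contDiffOn hs sm_1_0
  have sm_0_3 : ContDiffOn ℝ (⊤:ℕ∞) (opB (opB (opB ((fun p : ℂ × ℝ => ((v p : ℝ) : ℂ)))))) (Set.univ ×ˢ I) := opB_contDiffOn hs sm_0_2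
  have sm_1_2 : ContDiffOn ℝ (⊤:ℕ∞) (opA (opB (opB ((fun p : ℂ × ℝ => ((v p : ℝ) : ℂ)))))) (Set.univ ×ˢ I) := opA_contDiffOn hs sm_0_2
  have sm_2_1 : ContDiffOn ℝ (⊤:ℕ∞) (opA (opA (opB ((fun p : ℂ × ℝ => ((v p : ℝ) : ℂ)))))) (Set.univ ×ˢ I) := opA_contDiffOn hs sm_1_1
  have sm_3_0 : ContDiffOn ℝ (⊤:ℕ∞) (opA (opA (opA ((fun p : ℂ × ℝ => ((v p : ℝ) : ℂ)))))) (Set.univ ×ˢ I) := opA_contDiffOn hs sm_2_0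
  have sm_0_4 : ContDiffOn ℝ (⊤:ℕ∞) (opB (opB (opB (opB ((fun p : ℂ × ℝ => ((v p : ℝ) : ℂ))))))) (Set.univ ×ˢ I) := opB_contDiffOn hs sm_0_3
  have sm_1_3 : ContDiffOn ℝ (⊤:ℕ∞) (opA (opB (opB (opB ((fun p : ℂ × ℝ => ((v p : ℝ) : ℂ))))))) (Set.univ ×ˢ I) := opA_contDiffOn hs sm_0_3
  have sm_2_2 : ContDiffOn ℝ (⊤:ℕ∞) (opA (opA (opB (opB ((fun p : ℂ × ℝ => ((v p : ℝ) : ℂ))))))) (Set.univ ×ˢ I) := opA_contDiffOn hs sm_1_2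
  have sm_3_1 : ContDiffOn ℝ (⊤:ℕ∞) (opA (opA (opA (opB ((fun p : ℂ × ℝ => ((v p : ℝ) : ℂ))))))) (Set.univ ×ˢ I) := opA_contDiffOn hs sm_2_1
  have sm_4_0 : ContDiffOn ℝ (⊤:ℕ∞) (opA (opA (opA (opA ((fun p : ℂ × ℝ => ((v p : ℝ) : ℂ))))))) (Set.univ ×ˢ I) := opA_contDiffOn hs sm_3_0
  have sm_1_4 : ContDiffOn ℝ (⊤:ℕ∞) (opA (opB (opB (opB (opB ((fun p : ℂ × ℝ => ((v p : ℝ) : ℂ)))))))) (Set.univ ×ˢ I) := opA_contDiffOn hs sm_0_4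
  have sm_2_3 : ContDiffOn ℝ (⊤:ℕ∞) (opA (opA (opB (opB (opB ((fun p : ℂ × ℝ => ((v p : ℝ) : ℂ)))))))) (Set.univ ×ˢ I) := opA_contDiffOn hs sm_1_3
  have sm_3_2 : ContDiffOn ℝ (⊤:ℕ∞) (opA (opA (opA (opB (opB ((fun p : ℂ × ℝ => ((v p : ℝ) : ℂ)))))))) (Set.univ ×ˢ I) := opA_contDiffOn hs sm_2_2
  have sm_4_1 : ContDiffOn ℝ (⊤:ℕ∞) (opA (opA (opA (opA (opB ((fun p : ℂ × ℝ => ((v p : ℝ) : ℂ)))))))) (Set.univ ×ˢ I) := opA_contDiffOn hs sm_3_1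
  have cB_1_0 : Set.EqOn (opB (opA ((fun p : ℂ × ℝ => ((v p : ℝ) : ℂ))))) (opA (opB ((fun p : ℂ × ℝ => ((v p : ℝ) : ℂ))))) (Set.univ ×ˢ I) := opB_opA_comm hs hu
  have cB_2_0 : Set.EqOn (opB (opA (opA ((fun p : ℂ × ℝ => ((v p : ℝ) : ℂ)))))) (opA (opA (opB ((fun p : ℂ × ℝ => ((v p : ℝ) : ℂ)))))) (Set.univ ×ˢ I) := fun p hp => (opB_opA_comm hs sm_1_0 hp).trans (opA_congr hs cB_1_0 hp)
  have cB_3_0 : Set.EqOn (opB (opA (opA (opA ((fun p : ℂ × ℝ => ((v p : ℝ) : ℂ))))))) (opA (opA (opA (opB ((fun p : ℂ × ℝ => ((v p : ℝ) : ℂ))))))) (Set.univ ×ˢ I) := fun p hp => (opB_opA_comm hs sm_2_0 hp).trans (opA_congr hs cB_2_0 hp)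
  have cB_1_1 : Set.EqOn (opB (opA (opB ((fun p : ℂ × ℝ => ((v p : ℝ) : ℂ)))))) (opA (opB (opB ((fun p : ℂ × ℝ => ((v p : ℝ) : ℂ)))))) (Set.univ ×ˢ I) := opB_opA_comm hs sm_0_1
  have cB_1_2 : Set.EqOn (opB (opA (opB (opB ((fun p : ℂ × ℝ => ((v p : ℝ) : ℂ))))))) (opA (opB (opB (opB ((fun p : ℂ × ℝ => ((v p : ℝ) : ℂ))))))) (Set.univ ×ˢ I) := opB_opA_comm hs sm_0_2
  have cB_1_3 : Set.EqOn (opB (opA (opB (opB (opB ((fun p : ℂ × ℝ => ((v p : ℝ) : ℂ)))))))) (opA (opB (opB (opB (opB ((fun p : ℂ × ℝ => ((v p : ℝ) : ℂ)))))))) (Set.univ ×ˢ I) := opB_opA_comm hs sm_0_3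
  have cTA_1 : Set.EqOn (opT (opA ((fun p : ℂ × ℝ => ((v p : ℝ) : ℂ))))) (opA (opT (fun p : ℂ × ℝ => ((v p : ℝ) : ℂ)))) (Set.univ ×ˢ I) := opT_opA_comm hs hu
  have cTA_2 : Set.EqOn (opT (opA (opA ((fun p : ℂ × ℝ => ((v p : ℝ) : ℂ)))))) (opA (opA (opT (fun p : ℂ × ℝ => ((v p : ℝ) : ℂ))))) (Set.univ ×ˢ I) := fun p hp => (opT_opA_comm hs sm_1_0 hp).trans (opA_congr hs cTA_1 hp)
  have cTA_3 : Set.EqOn (opT (opA (opA (opA ((fun p : ℂ × ℝ => ((v p : ℝ) : ℂ))))))) (opA (opA (opA (opT (fun p : ℂ × ℝ => ((v p : ℝ) : ℂ)))))) (Set.univ ×ˢ I) := fun p hp => (opT_opA_comm hs sm_2_0 hp).trans (opA_congr hs cTA_2 hp)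
  have cTB_1 : Set.EqOn (opT (opB ((fun p : ℂ × ℝ => ((v p : ℝ) : ℂ))))) (opB (opT (fun p : ℂ × ℝ => ((v p : ℝ) : ℂ)))) (Set.univ ×ˢ I) := opT_opB_comm hs hu
  have cTB_2 : Set.EqOn (opT (opB (opB ((fun p : ℂ × ℝ => ((v p : ℝ) : ℂ)))))) (opB (opB (opT (fun p : ℂ × ℝ => ((v p : ℝ) : ℂ))))) (Set.univ ×ˢ I) := fun p hp => (opT_opB_comm hs sm_0_1 hp).trans (opB_congr hs cTB_1 hp)
  have cTB_3 : Set.EqOn (opT (opB (opB (opB ((fun p : ℂ × ℝ => ((v p : ℝ) : ℂ))))))) (opB (opB (opB (opT (fun p : ℂ × ℝ => ((v p : ℝ) : ℂ)))))) (Set.univ ×ˢ I) := fun p hp => (opT_opB_comm hs sm_0_2 hp).trans (opB_congr hs cTB_2 hp)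
  have hflow : Set.EqOn (opT (fun p : ℂ × ℝ => ((v p : ℝ) : ℂ))) (fun q => 4 * ((((v q : ℝ) : ℂ) * opA (opB ((fun p : ℂ × ℝ => ((v p : ℝ) : ℂ)))) q) - (opA ((fun p : ℂ × ℝ => ((v p : ℝ) : ℂ))) q * opB ((fun p : ℂ × ℝ => ((v p : ℝ) : ℂ))) q))) (Set.univ ×ˢ I) := flow_opT hI_open hv_smooth hv_flow
  have eTPA : Set.EqOn (opA (opA (opA (opT (fun p : ℂ × ℝ => ((v p : ℝ) : ℂ)))))) (opA (opA (opA (fun q => 4 * ((((v q : ℝ) : ℂ) * opA (opB ((fun p : ℂ × ℝ => ((v p : ℝ) : ℂ)))) q) - (opA ((fun p : ℂ × ℝ => ((v p : ℝ) : ℂ))) q * opB ((fun p : ℂ × ℝ => ((v p : ℝ) : ℂ))) q)))))) (Set.univ ×ˢ I) := opA_congr hs (opA_congr hs (opA_congr hs hflow))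
  have eTPB : Set.EqOn (opB (opB (opB (opT (fun p : ℂ × ℝ => ((v p : ℝ) : ℂ)))))) (opB (opB (opB (fun q => 4 * ((((v q : ℝ) : ℂ) * opA (opB ((fun p : ℂ × ℝ => ((v p : ℝ) : ℂ)))) q) - (opA ((fun p : ℂ × ℝ => ((v p : ℝ) : ℂ))) q * opB ((fun p : ℂ × ℝ => ((v p : ℝ) : ℂ))) q)))))) (Set.univ ×ˢ I) := opB_congr hs (opB_congr hs (opB_congr hs hflow))
  have ePA1 : Set.EqOn (opA (fun q => 4 * ((((v q : ℝ) : ℂ) * opA (opB ((fun p : ℂ × ℝ => ((v p : ℝ) : ℂ)))) q) - (opA ((fun p : ℂ × ℝ => ((v p : ℝ) : ℂ))) q * opB ((fun p : ℂ × ℝ => ((v p : ℝ) : ℂ))) q)))) (fun q => 4 * ((opA ((fun p : ℂ × ℝ => ((v p : ℝ) : ℂ))) q * opA (opB ((fun p : ℂ × ℝ => ((v p : ℝ) : ℂ)))) q + ((v q : ℝ) : ℂ) * opA (opA (opB ((fun p : ℂ × ℝ => ((v p : ℝ) : ℂ))))) q) - (opA (opA ((fun p : ℂ × ℝ => ((v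 p : ℝ) : ℂ)))) q * opB ((fun p : ℂ × ℝ => ((v p : ℝ) : ℂ))) q + opA ((fun p : ℂ × ℝ => ((v p : ℝ) : ℂ))) q * opA (opB ((fun p : ℂ × ℝ => ((v p : ℝ) : ℂ)))) q))) (Set.univ ×ˢ I) := by
    intro p hp
    rw [opA_const_mul hs ((hu.mul sm_1_1).sub (sm_1_0.mul sm_0_1)) hp 4, opA_sub hs (hu.mul sm_1_1) (sm_1_0.mul sm_0_1) hp, opA_mul hs hu sm_1_1 hp, opA_mul hs sm_1_0 sm_0_1 hp]
    try ring
  have ePA2 : Set.EqOn (opA (opA (fun q => 4 * ((((v q : ℝ) : ℂ) * opA (opB ((fun p : ℂ × ℝ => ((v p : ℝ) : ℂ)))) q) - (opA ((fun p : ℂ × ℝ => ((v p : ℝ) : ℂ))) q * opB ((fun p : ℂ × ℝ => ((v p : ℝ) : ℂ))) q))))) (fun q => 4 * ((opA (opA ((fun p : ℂ × ℝ => ((v p : ℝ) : ℂ)))) q * opA (opB ((fun p : ℂ × ℝ => ((v p : ℝ) : ℂ)))) q + opA ((fun p : ℂ × ℝ => ((v p : ℝ) : ℂ))) q * opA (opA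 (opB ((fun p : ℂ × ℝ => ((v p : ℝ) : ℂ))))) q + opA ((fun p : ℂ × ℝ => ((v p : ℝ) : ℂ))) q * opA (opA (opB ((fun p : ℂ × ℝ => ((v p : ℝ) : ℂ))))) q + ((v q : ℝ) : ℂ) * opA (opA (opA (opB ((fun p : ℂ × ℝ => ((v p : ℝ) : ℂ)))))) q) - (opA (opA (opA ((fun p : ℂ × ℝ => ((v p : ℝ) : ℂ))))) q * opB ((fun p : ℂ × ℝ => ((v p : ℝ) : ℂ))) q + opA (opA ((fun p : ℂ × ℝ => ((v p : ℝ) : ℂ)))) q * opA (opB ((fun p : ℂ × ℝ => ((v p : ℝ) : ℂ)))) q + opA (opA ((fun p : ℂ × ℝ => ((v p : ℝ) : ℂ)))) q * opA (opB ((fun p : ℂ × ℝ => ((v p : ℝ) : ℂ)))) q + opA ((fun p : ℂ × ℝ => ((v p : ℝ) : ℂ))) q * opA (opA (opB ((fun p : ℂ × ℝ => ((v p : ℝ) : ℂ))))) q))) (Set.univ ×ˢ I) := by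
    intro p hp
    rw [opA_congr hs ePA1 hp, opA_const_mul hs (((sm_1_0.mul sm_1_1).add (hu.mul sm_2_1)).sub ((sm_2_0.mul sm_0_1).add (sm_1_0.mul sm_1_1))) hp 4, opA_sub hs ((sm_1_0.mul sm_1_1).add (hu.mul sm_2_1)) ((sm_2_0.mul sm_0_1).add (sm_1_0.mul sm_1_1)) hp, opA_add hs (sm_1_0.mul sm_1_1) (hu.mul sm_2_1) hp, opA_add hs (sm_2_0.mul sm_0_1) (sm_1_0.mul sm_1_1) hp, opA_mul hs sm_1_0 sm_1_1 hp, opA_mul hs hu sm_2_1 hp, opA_mul hs sm_2_0 sm_0_1 hp]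
    try ring
  have vA3 : opA (opA (opA (fun q => 4 * ((((v q : ℝ) : ℂ) * opA (opB ((fun p : ℂ × ℝ => ((v p : ℝ) : ℂ)))) q) - (opA ((fun p : ℂ × ℝ => ((v p : ℝ) : ℂ))) q * opB ((fun p : ℂ × ℝ => ((v p : ℝ) : ℂ))) q))))) (x, t) = 4 * ((opA (opA (opA ((fun p : ℂ × ℝ => ((v p : ℝ) : ℂ))))) (x, t) * opA (opB ((fun p : ℂ × ℝ => ((v p : ℝ) : ℂ)))) (x, t) + opA (opA ((fun p : ℂ × ℝ => ((v p : ℝ) : ℂ)))) (x, t) * opA (opA (opB ((fun p : ℂ × ℝ => ((v p : ℝ) : ℂ))))) (x, t) + opA (opA ((fun p : ℂ × ℝ => ((v p : ℝ) : ℂ)))) (x, t) * opA (opA (opB ((fun p : ℂ × ℝ => ((v p : ℝ) : ℂ))))) (x, t) + opA ((fun p : ℂ × ℝ => ((v p : ℝ) : ℂ))) (x, t) * opA (opA (opA (opB ((fun p : ℂ × ℝ => ((v p : ℝ) : ℂ)))))) (x, t) + opA (opA ((fun p : ℂ × ℝ => ((v p : ℝ) : ℂ)))) (x, t) * opA (opA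 (opB ((fun p : ℂ × ℝ => ((v p : ℝ) : ℂ))))) (x, t) + opA ((fun p : ℂ × ℝ => ((v p : ℝ) : ℂ))) (x, t) * opA (opA (opA (opB ((fun p : ℂ × ℝ => ((v p : ℝ) : ℂ)))))) (x, t) + opA ((fun p : ℂ × ℝ => ((v p : ℝ) : ℂ))) (x, t) * opA (opA (opA (opB ((fun p : ℂ × ℝ => ((v p : ℝ) : ℂ)))))) (x, t) + ((v (x, t) : ℝ) : ℂ) * opA (opA (opA (opA (opB ((fun p : ℂ × ℝ => ((v p : ℝ) : ℂ))))))) (x, t)) - (opA (opA (opA (opA ((fun p : ℂ × ℝ => ((v p : ℝ) : ℂ)))))) (x, t) * opB ((fun p : ℂ × ℝ => ((v p : ℝ) : ℂ))) (x, t) + opA (opA (opA ((fun p : ℂ × ℝ => ((v p : ℝ) : ℂ))))) (x, t) * opA (opB ((fun p : ℂ × ℝ => ((v p : ℝ) : ℂ)))) (x, t) + opA (opA (opA ((fun p : ℂ × ℝ => ((v p : ℝ) : ℂ))))) (x, t) * opA (opB ((fun p : ℂ × ℝ => ((v p : ℝ) : ℂ)))) (x, t) + opA (opA ((fun p : ℂ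 × ℝ => ((v p : ℝ) : ℂ)))) (x, t) * opA (opA (opB ((fun p : ℂ × ℝ => ((v p : ℝ) : ℂ))))) (x, t) + opA (opA (opA ((fun p : ℂ × ℝ => ((v p : ℝ) : ℂ))))) (x, t) * opA (opB ((fun p : ℂ × ℝ => ((v p : ℝ) : ℂ)))) (x, t) + opA (opA ((fun p : ℂ × ℝ => ((v p : ℝ) : ℂ)))) (x, t) * opA (opA (opB ((fun p : ℂ × ℝ => ((v p : ℝ) : ℂ))))) (x, t) + opA (opA ((fun p : ℂ × ℝ => ((v p : ℝ) : ℂ)))) (x, t) * opA (opA (opB ((fun p : ℂ × ℝ => ((v p : ℝ) : ℂ))))) (x, t) + opA ((fun p : ℂ × ℝ => ((v p : ℝ) : ℂ))) (x, t) * opA (opA (opA (opB ((fun p : ℂ × ℝ => ((v p : ℝ) : ℂ)))))) (x, t))) := by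
    rw [opA_congr hs ePA2 hp0, opA_const_mul hs (((((sm_2_0.mul sm_1_1).add (sm_1_0.mul sm_2_1)).add (sm_1_0.mul sm_2_1)).add (hu.mul sm_3_1)).sub ((((sm_3_0.mul sm_0_1).add (sm_2_0.mul sm_1_1)).add (sm_2_0.mul sm_1_1)).add (sm_1_0.mul sm_2_1))) hp0 4, opA_sub hs ((((sm_2_0.mul sm_1_1).add (sm_1_0.mul sm_2_1)).add (sm_1_0.mul sm_2_1)).add (hu.mul sm_3_1)) ((((sm_3_0.mul sm_0_1).add (sm_2_0.mul sm_1_1)).add (sm_2_0.mul sm_1_1)).add (sm_1_0.mul sm_2_1)) hp0, opA_add hs (((sm_2_0.mul sm_1_1).add (sm_1_0.mul sm_2_1)).add (sm_1_0.mul sm_2_1)) (hu.mul sm_3_1) hp0, opA_add hs ((sm_2_0.mul sm_1_1).add (sm_1_0.mul sm_2_1)) (sm_1_0.mul sm_2_1) hp0, opA_add hs (sm_2_0.mul sm_1_1) (sm_1_0.mul sm_2_1) hp0, opA_add hs (((sm_3_0.mul sm_0_1).add (sm_2_0.mul sm_1_1)).add (sm_2_0.mul sm_1_1)) (sm_1_0.mul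 sm_2_1) hp0, opA_add hs ((sm_3_0.mul sm_0_1).add (sm_2_0.mul sm_1_1)) (sm_2_0.mul sm_1_1) hp0, opA_add hs (sm_3_0.mul sm_0_1) (sm_2_0.mul sm_1_1) hp0, opA_mul hs sm_2_0 sm_1_1 hp0, opA_mul hs sm_1_0 sm_2_1 hp0, opA_mul hs hu sm_3_1 hp0, opA_mul hs sm_3_0 sm_0_1 hp0]
    try ring
  have ePB1 : Set.EqOn (opB (fun q => 4 * ((((v q : ℝ) : ℂ) * opA (opB ((fun p : ℂ × ℝ => ((v p : ℝ) : ℂ)))) q) - (opA ((fun p : ℂ × ℝ => ((v p : ℝ) : ℂ))) q * opB ((fun p : ℂ × ℝ => ((v p : ℝ) : ℂ))) q)))) (fun q => 4 * ((opB ((fun p : ℂ × ℝ => ((v p : ℝ) : ℂ))) q * opA (opB ((fun p : ℂ × ℝ => ((v p : ℝ) : ℂ)))) q + ((v q : ℝ) : ℂ) * opA (opB (opB ((fun p : ℂ × ℝ => ((v p : ℝ) : ℂ))))) q) - (opA (opB ((fun p : ℂ × ℝ => ((v p : ℝ) : ℂ)))) q * opB ((fun p : ℂ × ℝ => ((v p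 : ℝ) : ℂ))) q + opA ((fun p : ℂ × ℝ => ((v p : ℝ) : ℂ))) q * opB (opB ((fun p : ℂ × ℝ => ((v p : ℝ) : ℂ)))) q))) (Set.univ ×ˢ I) := by
    intro p hp
    rw [opB_const_mul hs ((hu.mul sm_1_1).sub (sm_1_0.mul sm_0_1)) hp 4, opB_sub hs (hu.mul sm_1_1) (sm_1_0.mul sm_0_1) hp, opB_mul hs hu sm_1_1 hp, opB_mul hs sm_1_0 sm_0_1 hp, cB_1_1 hp, cB_1_0 hp]
    try ring
  have ePB2 : Set.EqOn (opB (opB (fun q => 4 * ((((v q : ℝ) : ℂ) * opA (opB ((fun p : ℂ × ℝ => ((v p : ℝ) : ℂ)))) q) - (opA ((fun p : ℂ × ℝ => ((v p : ℝ) : ℂ))) q * opB ((fun p : ℂ × ℝ => ((v p : ℝ) : ℂ))) q))))) (fun q => 4 * ((opB (opB ((fun p : ℂ × ℝ => ((v p : ℝ) : ℂ)))) q * opA (opB ((fun p : ℂ × ℝ => ((v p : ℝ) : ℂ)))) q + opB ((fun p : ℂ × ℝ => ((v p : ℝ) : ℂ))) q * opA (opB (opB ((fun p : ℂ × ℝ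 => ((v p : ℝ) : ℂ))))) q + opB ((fun p : ℂ × ℝ => ((v p : ℝ) : ℂ))) q * opA (opB (opB ((fun p : ℂ × ℝ => ((v p : ℝ) : ℂ))))) q + ((v q : ℝ) : ℂ) * opA (opB (opB (opB ((fun p : ℂ × ℝ => ((v p : ℝ) : ℂ)))))) q) - (opA (opB (opB ((fun p : ℂ × ℝ => ((v p : ℝ) : ℂ))))) q * opB ((fun p : ℂ × ℝ => ((v p : ℝ) : ℂ))) q + opA (opB ((fun p : ℂ × ℝ => ((v p : ℝ) : ℂ)))) q * opB (opB ((fun p : ℂ × ℝ => ((v p : ℝ) : ℂ)))) q + opA (opB ((fun p : ℂ × ℝ => ((v p : ℝ) : ℂ)))) q * opB (opB ((fun p : ℂ × ℝ => ((v p : ℝ) : ℂ)))) q + opA ((fun p : ℂ × ℝ => ((v p : ℝ) : ℂ))) q * opB (opB (opB ((fun p : ℂ × ℝ => ((v p : ℝ) : ℂ))))) q))) (Set.univ ×ˢ I) := by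
    intro p hp
    rw [opB_congr hs ePB1 hp, opB_const_mul hs (((sm_0_1.mul sm_1_1).add (hu.mul sm_1_2)).sub ((sm_1_1.mul sm_0_1).add (sm_1_0.mul sm_0_2))) hp 4, opB_sub hs ((sm_0_1.mul sm_1_1).add (hu.mul sm_1_2)) ((sm_1_1.mul sm_0_1).add (sm_1_0.mul sm_0_2)) hp, opB_add hs (sm_0_1.mul sm_1_1) (hu.mul sm_1_2) hp, opB_add hs (sm_1_1.mul sm_0_1) (sm_1_0.mul sm_0_2) hp, opB_mul hs sm_0_1 sm_1_1 hp, opB_mul hs hu sm_1_2 hp, opB_mul hs sm_1_1 sm_0_1 hp, opB_mul hs sm_1_0 sm_0_2 hp, cB_1_1 hp, cB_1_2 hp, cB_1_0 hp]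
    try ring
  have vB3 : opB (opB (opB (fun q => 4 * ((((v q : ℝ) : ℂ) * opA (opB ((fun p : ℂ × ℝ => ((v p : ℝ) : ℂ)))) q) - (opA ((fun p : ℂ × ℝ => ((v p : ℝ) : ℂ))) q * opB ((fun p : ℂ × ℝ => ((v p : ℝ) : ℂ))) q))))) (x, t) = 4 * ((opB (opB (opB ((fun p : ℂ × ℝ => ((v p : ℝ) : ℂ))))) (x, t) * opA (opB ((fun p : ℂ × ℝ => ((v p : ℝ) : ℂ)))) (x, t) + opB (opB ((fun p : ℂ × ℝ => ((v p : ℝ) : ℂ)))) (x, t) * opA (opB (opB ((fun p : ℂ × ℝ => ((v p : ℝ) : ℂ))))) (x, t) + opB (opB ((fun p : ℂ × ℝ => ((v p : ℝ) : ℂ)))) (x, t) * opA (opB (opB ((fun p : ℂ × ℝ => ((v p : ℝ) : ℂ))))) (x, t) + opB ((fun p : ℂ × ℝ => ((v p : ℝ) : ℂ))) (x, t) * opA (opB (opB (opB ((fun p : ℂ × ℝ => ((v p : ℝ) : ℂ)))))) (x, t) + opB (opB ((fun p : ℂ × ℝ => ((v p : ℝ) : ℂ)))) (x, t) * opA (opB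 (opB ((fun p : ℂ × ℝ => ((v p : ℝ) : ℂ))))) (x, t) + opB ((fun p : ℂ × ℝ => ((v p : ℝ) : ℂ))) (x, t) * opA (opB (opB (opB ((fun p : ℂ × ℝ => ((v p : ℝ) : ℂ)))))) (x, t) + opB ((fun p : ℂ × ℝ => ((v p : ℝ) : ℂ))) (x, t) * opA (opB (opB (opB ((fun p : ℂ × ℝ => ((v p : ℝ) : ℂ)))))) (x, t) + ((v (x, t) : ℝ) : ℂ) * opA (opB (opB (opB (opB ((fun p : ℂ × ℝ => ((v p : ℝ) : ℂ))))))) (x, t)) - (opA (opB (opB (opB ((fun p : ℂ × ℝ => ((v p : ℝ) : ℂ)))))) (x, t) * opB ((fun p : ℂ × ℝ => ((v p : ℝ) : ℂ))) (x, t) + opA (opB (opB ((fun p : ℂ × ℝ => ((v p : ℝ) : ℂ))))) (x, t) * opB (opB ((fun p : ℂ × ℝ => ((v p : ℝ) : ℂ)))) (x, t) + opA (opB (opB ((fun p : ℂ × ℝ => ((v p : ℝ) : ℂ))))) (x, t) * opB (opB ((fun p : ℂ × ℝ => ((v p : ℝ) : ℂ)))) (x, t) + opA (opB ((fun p : ℂ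 × ℝ => ((v p : ℝ) : ℂ)))) (x, t) * opB (opB (opB ((fun p : ℂ × ℝ => ((v p : ℝ) : ℂ))))) (x, t) + opA (opB (opB ((fun p : ℂ × ℝ => ((v p : ℝ) : ℂ))))) (x, t) * opB (opB ((fun p : ℂ × ℝ => ((v p : ℝ) : ℂ)))) (x, t) + opA (opB ((fun p : ℂ × ℝ => ((v p : ℝ) : ℂ)))) (x, t) * opB (opB (opB ((fun p : ℂ × ℝ => ((v p : ℝ) : ℂ))))) (x, t) + opA (opB ((fun p : ℂ × ℝ => ((v p : ℝ) : ℂ)))) (x, t) * opB (opB (opB ((fun p : ℂ × ℝ => ((v p : ℝ) : ℂ))))) (x, t) + opA ((fun p : ℂ × ℝ => ((v p : ℝ) : ℂ))) (x, t) * opB (opB (opB (opB ((fun p : ℂ × ℝ => ((v p : ℝ) : ℂ)))))) (x, t))) := by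
    rw [opB_congr hs ePB2 hp0, opB_const_mul hs (((((sm_0_2.mul sm_1_1).add (sm_0_1.mul sm_1_2)).add (sm_0_1.mul sm_1_2)).add (hu.mul sm_1_3)).sub ((((sm_1_2.mul sm_0_1).add (sm_1_1.mul sm_0_2)).add (sm_1_1.mul sm_0_2)).add (sm_1_0.mul sm_0_3))) hp0 4, opB_sub hs ((((sm_0_2.mul sm_1_1).add (sm_0_1.mul sm_1_2)).add (sm_0_1.mul sm_1_2)).add (hu.mul sm_1_3)) ((((sm_1_2.mul sm_0_1).add (sm_1_1.mul sm_0_2)).add (sm_1_1.mul sm_0_2)).add (sm_1_0.mul sm_0_3)) hp0, opB_add hs (((sm_0_2.mul sm_1_1).add (sm_0_1.mul sm_1_2)).add (sm_0_1.mul sm_1_2)) (hu.mul sm_1_3) hp0, opB_add hs ((sm_0_2.mul sm_1_1).add (sm_0_1.mul sm_1_2)) (sm_0_1.mul sm_1_2) hp0, opB_add hs (sm_0_2.mul sm_1_1) (sm_0_1.mul sm_1_2) hp0, opB_add hs (((sm_1_2.mul sm_0_1).add (sm_1_1.mul sm_0_2)).add (sm_1_1.mul sm_0_2)) (sm_1_0.mul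 sm_0_3) hp0, opB_add hs ((sm_1_2.mul sm_0_1).add (sm_1_1.mul sm_0_2)) (sm_1_1.mul sm_0_2) hp0, opB_add hs (sm_1_2.mul sm_0_1) (sm_1_1.mul sm_0_2) hp0, opB_mul hs sm_0_2 sm_1_1 hp0, opB_mul hs sm_0_1 sm_1_2 hp0, opB_mul hs hu sm_1_3 hp0, opB_mul hs sm_1_2 sm_0_1 hp0, opB_mul hs sm_1_1 sm_0_2 hp0, opB_mul hs sm_1_0 sm_0_3 hp0, cB_1_1 hp0, cB_1_2 hp0, cB_1_3 hp0, cB_1_0 hp0]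
    try ring
  have eG1 : Set.EqOn (opB (fun q => ((v q : ℝ) : ℂ) * opA (opA (opA ((fun p : ℂ × ℝ => ((v p : ℝ) : ℂ))))) q * opB (opB (opB ((fun p : ℂ × ℝ => ((v p : ℝ) : ℂ))))) q)) (fun q => opB ((fun p : ℂ × ℝ => ((v p : ℝ) : ℂ))) q * opA (opA (opA ((fun p : ℂ × ℝ => ((v p : ℝ) : ℂ))))) q * opB (opB (opB ((fun p : ℂ × ℝ => ((v p : ℝ) : ℂ))))) q + ((v q : ℝ) : ℂ) * opA (opA (opA (opB ((fun p : ℂ × ℝ => ((v p : ℝ) : ℂ)))))) q * opB (opB (opB ((fun p : ℂ × ℝ => ((v p : ℝ) : ℂ))))) q + ((v q : ℝ) : ℂ) * opA (opA (opA ((fun p : ℂ × ℝ => ((v p : ℝ) : ℂ))))) q * opB (opB (opB (opB ((fun p : ℂ × ℝ => ((v p : ℝ) : ℂ)))))) q) (Set.univ ×ˢ I) := by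
    intro p hp
    rw [opB_mul hs (hu.mul sm_3_0) sm_0_3 hp, opB_mul hs hu sm_3_0 hp, cB_3_0 hp]
    try ring
  have vLap : opA (opB (fun q => ((v q : ℝ) : ℂ) * opA (opA (opA ((fun p : ℂ × ℝ => ((v p : ℝ) : ℂ))))) q * opB (opB (opB ((fun p : ℂ × ℝ => ((v p : ℝ) : ℂ))))) q)) (x, t) = opA (opB ((fun p : ℂ × ℝ => ((v p : ℝ) : ℂ)))) (x, t) * opA (opA (opA ((fun p : ℂ × ℝ => ((v p : ℝ) : ℂ))))) (x, t) * opB (opB (opB ((fun p : ℂ × ℝ => ((v p : ℝ) : ℂ))))) (x, t) + opB ((fun p : ℂ × ℝ => ((v p : ℝ) : ℂ))) (x, t) * opA (opA (opA (opA ((fun p : ℂ × ℝ => ((v p : ℝ) : ℂ)))))) (x, t) * opB (opB (opB ((fun p : ℂ × ℝ => ((v p : ℝ) : ℂ))))) (x, t) + opB ((fun p : ℂ × ℝ => ((v p : ℝ) : ℂ))) (x, t) * opA (opA (opA ((fun p : ℂ × ℝ => ((v p : ℝ) : ℂ))))) (x, t) * opA (opB (opB (opB ((fun p : ℂ × ℝ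 => ((v p : ℝ) : ℂ)))))) (x, t) + opA ((fun p : ℂ × ℝ => ((v p : ℝ) : ℂ))) (x, t) * opA (opA (opA (opB ((fun p : ℂ × ℝ => ((v p : ℝ) : ℂ)))))) (x, t) * opB (opB (opB ((fun p : ℂ × ℝ => ((v p : ℝ) : ℂ))))) (x, t) + ((v (x, t) : ℝ) : ℂ) * opA (opA (opA (opA (opB ((fun p : ℂ × ℝ => ((v p : ℝ) : ℂ))))))) (x, t) * opB (opB (opB ((fun p : ℂ × ℝ => ((v p : ℝ) : ℂ))))) (x, t) + ((v (x, t) : ℝ) : ℂ) * opA (opA (opA (opB ((fun p : ℂ × ℝ => ((v p : ℝ) : ℂ)))))) (x, t) * opA (opB (opB (opB ((fun p : ℂ × ℝ => ((v p : ℝ) : ℂ)))))) (x, t) + opA ((fun p : ℂ × ℝ => ((v p : ℝ) : ℂ))) (x, t) * opA (opA (opA ((fun p : ℂ × ℝ => ((v p : ℝ) : ℂ))))) (x, t) * opB (opB (opB (opB ((fun p : ℂ × ℝ => ((v p : ℝ) : ℂ)))))) (x, t) + ((v (x, t) : ℝ) : ℂ) * opA (opA (opA (opA ((fun p : ℂ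 × ℝ => ((v p : ℝ) : ℂ)))))) (x, t) * opB (opB (opB (opB ((fun p : ℂ × ℝ => ((v p : ℝ) : ℂ)))))) (x, t) + ((v (x, t) : ℝ) : ℂ) * opA (opA (opA ((fun p : ℂ × ℝ => ((v p : ℝ) : ℂ))))) (x, t) * opA (opB (opB (opB (opB ((fun p : ℂ × ℝ => ((v p : ℝ) : ℂ))))))) (x, t) := by
    rw [opA_congr hs eG1 hp0, opA_add hs (((sm_0_1.mul sm_3_0).mul sm_0_3).add ((hu.mul sm_3_1).mul sm_0_3)) ((hu.mul sm_3_0).mul sm_0_4) hp0, opA_add hs ((sm_0_1.mul sm_3_0).mul sm_0_3) ((hu.mul sm_3_1).mul sm_0_3) hp0, opA_mul hs (sm_0_1.mul sm_3_0) sm_0_3 hp0, opA_mul hs sm_0_1 sm_3_0 hp0, opA_mul hs (hu.mul sm_3_1) sm_0_3 hp0, opA_mul hs hu sm_3_1 hp0, opA_mul hs (hu.mul sm_3_0) sm_0_4 hp0, opA_mul hs hu sm_3_0 hp0]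
    try ring
  have hQG : ∀ q : ℂ × ℝ, q.2 ∈ I → QDHS v q = ((v q : ℝ) : ℂ) * opA (opA (opA ((fun p : ℂ × ℝ => ((v p : ℝ) : ℂ))))) q * opB (opB (opB ((fun p : ℂ × ℝ => ((v p : ℝ) : ℂ))))) q := by
    rintro ⟨w, τ⟩ hq
    have k1 : wz (fun w' => ((v (w', τ) : ℝ) : ℂ)) = fun w' => opA ((fun p : ℂ × ℝ => ((v p : ℝ) : ℂ))) (w', τ) := wz_slice_fun hI_open hu hq
    have k2 : wz (fun w' => opA ((fun p : ℂ × ℝ => ((v p : ℝ) : ℂ))) (w', τ)) = fun w' => opA (opA ((fun p : ℂ × ℝ => ((v p : ℝ) : ℂ)))) (w', τ) := wz_slice_fun hI_open sm_1_0 hq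
    have k3 : wz (fun w' => opA (opA ((fun p : ℂ × ℝ => ((v p : ℝ) : ℂ)))) (w', τ)) = fun w' => opA (opA (opA ((fun p : ℂ × ℝ => ((v p : ℝ) : ℂ))))) (w', τ) := wz_slice_fun hI_open sm_2_0 hq
    have m1 : wzb (fun w' => ((v (w', τ) : ℝ) : ℂ)) = fun w' => opB ((fun p : ℂ × ℝ => ((v p : ℝ) : ℂ))) (w', τ) := wzb_slice_fun hI_open hu hq
    have m2 : wzb (fun w' => opB ((fun p : ℂ × ℝ => ((v p : ℝ) : ℂ))) (w', τ)) = fun w' => opB (opB ((fun p : ℂ × ℝ => ((v p : ℝ) : ℂ)))) (w', τ) := wzb_slice_fun hI_open sm_0_1 hq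
    have m3 : wzb (fun w' => opB (opB ((fun p : ℂ × ℝ => ((v p : ℝ) : ℂ)))) (w', τ)) = fun w' => opB (opB (opB ((fun p : ℂ × ℝ => ((v p : ℝ) : ℂ))))) (w', τ) := wzb_slice_fun hI_open sm_0_2 hq
    show ((v (w, τ) : ℝ) : ℂ) * wz (wz (wz (fun w' => ((v (w', τ) : ℝ) : ℂ)))) w
        * wzb (wzb (wzb (fun w' => ((v (w', τ) : ℝ) : ℂ)))) w = _
    rw [k1, k2, k3, m1, m2, m3]
    try rfl
  have hev : (fun σ : ℝ => QDHS v (x, σ)) =ᶠ[nhds t] (fun σ : ℝ => ((v (x, σ) : ℝ) : ℂ) * opA (opA (opA ((fun p : ℂ × ℝ => ((v p : ℝ) : ℂ))))) (x, σ) * opB (opB (opB ((fun p : ℂ × ℝ => ((v p : ℝ) : ℂ))))) (x, σ)) := by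
    filter_upwards [hI_open.mem_nhds ht] with σ hσ
    exact hQG (x, σ) hσ
  rw [hev.deriv_eq]
  have hTG : deriv (fun σ : ℝ => ((v (x, σ) : ℝ) : ℂ) * opA (opA (opA ((fun p : ℂ × ℝ => ((v p : ℝ) : ℂ))))) (x, σ) * opB (opB (opB ((fun p : ℂ × ℝ => ((v p : ℝ) : ℂ))))) (x, σ)) t = opT (fun q => ((v q : ℝ) : ℂ) * opA (opA (opA ((fun p : ℂ × ℝ => ((v p : ℝ) : ℂ))))) q * opB (opB (opB ((fun p : ℂ × ℝ => ((v p : ℝ) : ℂ))))) q) (x, t) := derivT_slice hI_open ((hu.mul sm_3_0).mul sm_0_3) ht x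
  rw [hTG]
  have vTG : opT (fun q => ((v q : ℝ) : ℂ) * opA (opA (opA ((fun p : ℂ × ℝ => ((v p : ℝ) : ℂ))))) q * opB (opB (opB ((fun p : ℂ × ℝ => ((v p : ℝ) : ℂ))))) q) (x, t) = (4 * ((((v (x, t) : ℝ) : ℂ) * opA (opB ((fun p : ℂ × ℝ => ((v p : ℝ) : ℂ)))) (x, t)) - (opA ((fun p : ℂ × ℝ => ((v p : ℝ) : ℂ))) (x, t) * opB ((fun p : ℂ × ℝ => ((v p : ℝ) : ℂ))) (x, t)))) * opA (opA (opA ((fun p : ℂ × ℝ => ((v p : ℝ) : ℂ))))) (x, t) * opB (opB (opB ((fun p : ℂ × ℝ => ((v p : ℝ) : ℂ))))) (x, t)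
      + ((v (x, t) : ℝ) : ℂ) * (4 * ((opA (opA (opA ((fun p : ℂ × ℝ => ((v p : ℝ) : ℂ))))) (x, t) * opA (opB ((fun p : ℂ × ℝ => ((v p : ℝ) : ℂ)))) (x, t) + opA (opA ((fun p : ℂ × ℝ => ((v p : ℝ) : ℂ)))) (x, t) * opA (opA (opB ((fun p : ℂ × ℝ => ((v p : ℝ) : ℂ))))) (x, t) + opA (opA ((fun p : ℂ × ℝ => ((v p : ℝ) : ℂ)))) (x, t) * opA (opA (opB ((fun p : ℂ × ℝ => ((v p : ℝ) : ℂ))))) (x, t) + opA ((fun p : ℂ × ℝ => ((v p : ℝ) : ℂ))) (x, t) * opA (opA (opA (opB ((fun p : ℂ × ℝ => ((v p : ℝ) : ℂ)))))) (x, t) + opA (opA ((fun p : ℂ × ℝ => ((v p : ℝ) : ℂ)))) (x, t) * opA (opA (opB ((fun p : ℂ × ℝ => ((v p : ℝ) : ℂ))))) (x, t) + opA ((fun p : ℂ × ℝ => ((v p : ℝ) : ℂ))) (x, t) * opA (opA (opA (opB ((fun p : ℂ × ℝ => ((v p : ℝ) : ℂ)))))) (x, t) + opA ((fun p : ℂ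 × ℝ => ((v p : ℝ) : ℂ))) (x, t) * opA (opA (opA (opB ((fun p : ℂ × ℝ => ((v p : ℝ) : ℂ)))))) (x, t) + ((v (x, t) : ℝ) : ℂ) * opA (opA (opA (opA (opB ((fun p : ℂ × ℝ => ((v p : ℝ) : ℂ))))))) (x, t)) - (opA (opA (opA (opA ((fun p : ℂ × ℝ => ((v p : ℝ) : ℂ)))))) (x, t) * opB ((fun p : ℂ × ℝ => ((v p : ℝ) : ℂ))) (x, t) + opA (opA (opA ((fun p : ℂ × ℝ => ((v p : ℝ) : ℂ))))) (x, t) * opA (opB ((fun p : ℂ × ℝ => ((v p : ℝ) : ℂ)))) (x, t) + opA (opA (opA ((fun p : ℂ × ℝ => ((v p : ℝ) : ℂ))))) (x, t) * opA (opB ((fun p : ℂ × ℝ => ((v p : ℝ) : ℂ)))) (x, t) + opA (opA ((fun p : ℂ × ℝ => ((v p : ℝ) : ℂ)))) (x, t) * opA (opA (opB ((fun p : ℂ × ℝ => ((v p : ℝ) : ℂ))))) (x, t) + opA (opA (opA ((fun p : ℂ × ℝ => ((v p : ℝ) : ℂ))))) (x, t) * opA (opB ((fun p : ℂ × ℝ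 => ((v p : ℝ) : ℂ)))) (x, t) + opA (opA ((fun p : ℂ × ℝ => ((v p : ℝ) : ℂ)))) (x, t) * opA (opA (opB ((fun p : ℂ × ℝ => ((v p : ℝ) : ℂ))))) (x, t) + opA (opA ((fun p : ℂ × ℝ => ((v p : ℝ) : ℂ)))) (x, t) * opA (opA (opB ((fun p : ℂ × ℝ => ((v p : ℝ) : ℂ))))) (x, t) + opA ((fun p : ℂ × ℝ => ((v p : ℝ) : ℂ))) (x, t) * opA (opA (opA (opB ((fun p : ℂ × ℝ => ((v p : ℝ) : ℂ)))))) (x, t)))) * opB (opB (opB ((fun p : ℂ × ℝ => ((v p : ℝ) : ℂ))))) (x, t)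
      + ((v (x, t) : ℝ) : ℂ) * opA (opA (opA ((fun p : ℂ × ℝ => ((v p : ℝ) : ℂ))))) (x, t) * (4 * ((opB (opB (opB ((fun p : ℂ × ℝ => ((v p : ℝ) : ℂ))))) (x, t) * opA (opB ((fun p : ℂ × ℝ => ((v p : ℝ) : ℂ)))) (x, t) + opB (opB ((fun p : ℂ × ℝ => ((v p : ℝ) : ℂ)))) (x, t) * opA (opB (opB ((fun p : ℂ × ℝ => ((v p : ℝ) : ℂ))))) (x, t) + opB (opB ((fun p : ℂ × ℝ => ((v p : ℝ) : ℂ)))) (x, t) * opA (opB (opB ((fun p : ℂ × ℝ => ((v p : ℝ) : ℂ))))) (x, t) + opB ((fun p : ℂ × ℝ => ((v p : ℝ) : ℂ))) (x, t) * opA (opB (opB (opB ((fun p : ℂ × ℝ => ((v p : ℝ) : ℂ)))))) (x, t) + opB (opB ((fun p : ℂ × ℝ => ((v p : ℝ) : ℂ)))) (x, t) * opA (opB (opB ((fun p : ℂ × ℝ => ((v p : ℝ) : ℂ))))) (x, t) + opB ((fun p : ℂ × ℝ => ((v p : ℝ) : ℂ))) (x, t) * opA (opB (opB (opB ((fun p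 : ℂ × ℝ => ((v p : ℝ) : ℂ)))))) (x, t) + opB ((fun p : ℂ × ℝ => ((v p : ℝ) : ℂ))) (x, t) * opA (opB (opB (opB ((fun p : ℂ × ℝ => ((v p : ℝ) : ℂ)))))) (x, t) + ((v (x, t) : ℝ) : ℂ) * opA (opB (opB (opB (opB ((fun p : ℂ × ℝ => ((v p : ℝ) : ℂ))))))) (x, t)) - (opA (opB (opB (opB ((fun p : ℂ × ℝ => ((v p : ℝ) : ℂ)))))) (x, t) * opB ((fun p : ℂ × ℝ => ((v p : ℝ) : ℂ))) (x, t) + opA (opB (opB ((fun p : ℂ × ℝ => ((v p : ℝ) : ℂ))))) (x, t) * opB (opB ((fun p : ℂ × ℝ => ((v p : ℝ) : ℂ)))) (x, t) + opA (opB (opB ((fun p : ℂ × ℝ => ((v p : ℝ) : ℂ))))) (x, t) * opB (opB ((fun p : ℂ × ℝ => ((v p : ℝ) : ℂ)))) (x, t) + opA (opB ((fun p : ℂ × ℝ => ((v p : ℝ) : ℂ)))) (x, t) * opB (opB (opB ((fun p : ℂ × ℝ => ((v p : ℝ) : ℂ))))) (x, t) + opA (opB (opB ((fun p : ℂ ×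 ℝ => ((v p : ℝ) : ℂ))))) (x, t) * opB (opB ((fun p : ℂ × ℝ => ((v p : ℝ) : ℂ)))) (x, t) + opA (opB ((fun p : ℂ × ℝ => ((v p : ℝ) : ℂ)))) (x, t) * opB (opB (opB ((fun p : ℂ × ℝ => ((v p : ℝ) : ℂ))))) (x, t) + opA (opB ((fun p : ℂ × ℝ => ((v p : ℝ) : ℂ)))) (x, t) * opB (opB (opB ((fun p : ℂ × ℝ => ((v p : ℝ) : ℂ))))) (x, t) + opA ((fun p : ℂ × ℝ => ((v p : ℝ) : ℂ))) (x, t) * opB (opB (opB (opB ((fun p : ℂ × ℝ => ((v p : ℝ) : ℂ)))))) (x, t)))) := by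
    rw [opT_mul hs (hu.mul sm_3_0) sm_0_3 hp0, opT_mul hs hu sm_3_0 hp0, hflow hp0, cTA_3 hp0, cTB_3 hp0, eTPA hp0, eTPB hp0, vA3, vB3]
    beta_reduce
    try ring
  rw [vTG]
  have hQfun : (fun w => QDHS v (w, t)) = fun w => ((v (w, t) : ℝ) : ℂ) * opA (opA (opA ((fun p : ℂ × ℝ => ((v p : ℝ) : ℂ))))) (w, t) * opB (opB (opB ((fun p : ℂ × ℝ => ((v p : ℝ) : ℂ))))) (w, t) := funext fun w => hQG (w, t) ht
  rw [hQfun]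
  have hlapG : lapC (fun w => ((v (w, t) : ℝ) : ℂ) * opA (opA (opA ((fun p : ℂ × ℝ => ((v p : ℝ) : ℂ))))) (w, t) * opB (opB (opB ((fun p : ℂ × ℝ => ((v p : ℝ) : ℂ))))) (w, t)) x = 4 * opA (opB (fun q => ((v q : ℝ) : ℂ) * opA (opA (opA ((fun p : ℂ × ℝ => ((v p : ℝ) : ℂ))))) q * opB (opB (opB ((fun p : ℂ × ℝ => ((v p : ℝ) : ℂ))))) q)) (x, t) := lap_slice hI_open ((hu.mul sm_3_0).mul sm_0_3) ht x
  rw [hlapG, vLap]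
  have W1 : wz (fun w => ((v (w, t) : ℝ) : ℂ)) = fun w => opA ((fun p : ℂ × ℝ => ((v p : ℝ) : ℂ))) (w, t) := wz_slice_fun hI_open hu ht
  have W2 : wz (fun w => opA ((fun p : ℂ × ℝ => ((v p : ℝ) : ℂ))) (w, t)) = fun w => opA (opA ((fun p : ℂ × ℝ => ((v p : ℝ) : ℂ)))) (w, t) := wz_slice_fun hI_open sm_1_0 ht
  have W3 : wz (fun w => opA (opA ((fun p : ℂ × ℝ => ((v p : ℝ) : ℂ)))) (w, t)) = fun w => opA (opA (opA ((fun p : ℂ × ℝ => ((v p : ℝ) : ℂ))))) (w, t) := wz_slice_fun hI_open sm_2_0 ht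
  have W4 : wz (fun w => opA (opA (opA ((fun p : ℂ × ℝ => ((v p : ℝ) : ℂ))))) (w, t)) = fun w => opA (opA (opA (opA ((fun p : ℂ × ℝ => ((v p : ℝ) : ℂ)))))) (w, t) := wz_slice_fun hI_open sm_3_0 ht
  have Wb1 : wzb (fun w => ((v (w, t) : ℝ) : ℂ)) = fun w => opB ((fun p : ℂ × ℝ => ((v p : ℝ) : ℂ))) (w, t) := wzb_slice_fun hI_open hu ht
  have Wb2 : wzb (fun w => opB ((fun p : ℂ × ℝ => ((v p : ℝ) : ℂ))) (w, t)) = fun w => opB (opB ((fun p : ℂ × ℝ => ((v p : ℝ) : ℂ)))) (w, t) := wzb_slice_fun hI_open sm_0_1 ht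
  have Wb3 : wzb (fun w => opB (opB ((fun p : ℂ × ℝ => ((v p : ℝ) : ℂ)))) (w, t)) = fun w => opB (opB (opB ((fun p : ℂ × ℝ => ((v p : ℝ) : ℂ))))) (w, t) := wzb_slice_fun hI_open sm_0_2 ht
  have Wb4 : wzb (fun w => opB (opB (opB ((fun p : ℂ × ℝ => ((v p : ℝ) : ℂ))))) (w, t)) = fun w => opB (opB (opB (opB ((fun p : ℂ × ℝ => ((v p : ℝ) : ℂ)))))) (w, t) := wzb_slice_fun hI_open sm_0_3 ht
  have X1 : wz (fun w => opB ((fun p : ℂ × ℝ => ((v p : ℝ) : ℂ))) (w, t)) = fun w => opA (opB ((fun p : ℂ × ℝ => ((v p : ℝ) : ℂ)))) (w, t) := wz_slice_fun hI_open sm_0_1 ht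
  have X2 : wz (fun w => opA (opB ((fun p : ℂ × ℝ => ((v p : ℝ) : ℂ)))) (w, t)) = fun w => opA (opA (opB ((fun p : ℂ × ℝ => ((v p : ℝ) : ℂ))))) (w, t) := wz_slice_fun hI_open sm_1_1 ht
  have X3 : wz (fun w => opA (opA (opB ((fun p : ℂ × ℝ => ((v p : ℝ) : ℂ))))) (w, t)) = fun w => opA (opA (opA (opB ((fun p : ℂ × ℝ => ((v p : ℝ) : ℂ)))))) (w, t) := wz_slice_fun hI_open sm_2_1 ht
  have Y1 : wzb (fun w => opA ((fun p : ℂ × ℝ => ((v p : ℝ) : ℂ))) (w, t)) = fun w => opB (opA ((fun p : ℂ × ℝ => ((v p : ℝ) : ℂ)))) (w, t) := wzb_slice_fun hI_open sm_1_0 ht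
  have Y2 : wzb (fun w => opB (opA ((fun p : ℂ × ℝ => ((v p : ℝ) : ℂ)))) (w, t)) = fun w => opB (opB (opA ((fun p : ℂ × ℝ => ((v p : ℝ) : ℂ))))) (w, t) := wzb_slice_fun hI_open (opB_contDiffOn hs sm_1_0) ht
  have Y3 : wzb (fun w => opB (opB (opA ((fun p : ℂ × ℝ => ((v p : ℝ) : ℂ))))) (w, t)) = fun w => opB (opB (opB (opA ((fun p : ℂ × ℝ => ((v p : ℝ) : ℂ)))))) (w, t) := wzb_slice_fun hI_open (opB_contDiffOn hs (opB_contDiffOn hs sm_1_0)) ht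
  have d2 : Set.EqOn (opB (opB (opA ((fun p : ℂ × ℝ => ((v p : ℝ) : ℂ)))))) (opA (opB (opB ((fun p : ℂ × ℝ => ((v p : ℝ) : ℂ)))))) (Set.univ ×ˢ I) := fun p hp => (opB_congr hs cB_1_0 hp).trans (cB_1_1 hp)
  have d3 : Set.EqOn (opB (opB (opB (opA ((fun p : ℂ × ℝ => ((v p : ℝ) : ℂ))))))) (opA (opB (opB (opB ((fun p : ℂ × ℝ => ((v p : ℝ) : ℂ))))))) (Set.univ ×ˢ I) := fun p hp => (opB_congr hs d2 hp).trans (cB_1_2 hp)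
  rw [W1, W2, W3, W4, Wb1, Wb2, Wb3, Wb4, X1, X2, X3, Y1, Y2, Y3]
  beta_reduce
  rw [d3 hp0, hQG (x, t) ht]
  have hne : ((v (x, t) : ℝ) : ℂ) ≠ 0 := by
    exact_mod_cast (hv_pos (x, t) ht).ne'
  field_simp
  ring
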